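/- Suppose β ≤ 1, and define f″_ℓ(x) = ζ (d_j xᵢ − dᵢ x_j)^{(aᵢ+a_j)/β} (∏_{k ∉ {i,j}} x_k^{a_k})^{1/β} + z₀, where ζ = λ^{1/β} (u − ℓ)/(u^{1/β} − ℓ^{1/β}). Then f″_ℓ(x) ≤ f(x) for every x ∈ X ∩ W_{ij}. -/

import Mathlib

open Real Finset

lemma chord_aux {c A B t : ℝ} (hc0 : 0 < c) (hc1 : c ≤ 1) (hA : 0 ≤ A)
    (hAB : A < B) (hAt : A ≤ t) (htB : t ≤ B) :
    ((B - t) / (B - A)) * A ^ c + ((t - A) / (B - A)) * B ^ c ≤ t ^ c := by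
  have hBA : (0:ℝ) < B - A := by linarith
  have hB : (0:ℝ) ≤ B := by linarith
  have h := (Real.concaveOn_rpow hc0.le hc1).2 (Set.mem_Ici.2 hA) (Set.mem_Ici.2 hB)
    (show (0:ℝ) ≤ (B - t) / (B - A) by apply div_nonneg <;> linarith)
    (show (0:ℝ) ≤ (t - A) / (B - A) by apply div_nonneg <;> linarith)
    (by field_simp; ring)
  have ht : (B - t) / (B - A) * A + (t - A) / (B - A) * B = t := by
    rw [div_mul_eq_mul_div, div_mul_eq_mul_div, ← add_div, div_eq_iff hBA.ne']
    ring
  simpa [smul_eq_mul, ht] using h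

/-- For `β ≤ 1`, `f″_ℓ` is a minorant of `f` on `X ∩ W_{ij}`. -/
theorem second_lower_minorant (n : ℕ) (hn : 2 ≤ n) (a : Fin n → ℝ)
    (ha : ∀ k, 0 < a k) (ℓ u : ℝ) (hℓ : 0 < ℓ) (hℓu : ℓ < u)
    (i j : Fin n) (hij : i ≠ j) (p q : ℝ) (hp : 0 < p) (hpq : p < q)
    (β di dj lam z₀ ζ : ℝ) (hβ : β = ∑ k, a k) (hβ1 : β ≤ 1)
    (hdi : di = q ^ (-(a j / (a i + a j))) - p ^ (-(a j / (a i + a j))))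
    (hdj : dj = q ^ (a i / (a i + a j)) - p ^ (a i / (a i + a j)))
    (hlam : lam = p ^ a j / (dj - di * p) ^ (a i + a j))
    (hz₀ : z₀ = (u ^ (1 / β) * ℓ - ℓ ^ (1 / β) * u) / (u ^ (1 / β) - ℓ ^ (1 / β)))
    (hζ : ζ = lam ^ (1 / β) * (u - ℓ) / (u ^ (1 / β) - ℓ ^ (1 / β))) :
    ∀ x : Fin n → ℝ, (∀ k, 0 ≤ x k) →
      ℓ ≤ (∏ k, x k ^ a k) → (∏ k, x k ^ a k) ≤ u →
      p * x i ≤ x j → x j ≤ q * x i →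
      ζ * (dj * x i - di * x j) ^ ((a i + a j) / β) *
          (∏ k ∈ ({i, j} : Finset (Fin n))ᶜ, x k ^ a k) ^ (1 / β) + z₀ ≤
        ∏ k, x k ^ a k := by
  intro x hx hl hu hpx hqx
  have hq : 0 < q := hp.trans hpq
  have hqp : 0 < q - p := by linarith
  have hβ0 : 0 < β := by
    have : Nonempty (Fin n) := ⟨⟨0, by omega⟩⟩
    rw [hβ]; exact Finset.sum_pos (fun k _ => ha k) Finset.univ_nonempty
  set P := ∏ k, x k ^ a k with hP
  have hPpos : 0 < P := lt_of_lt_of_le hℓ hl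
  -- x i > 0
  have hxi : 0 < x i := by
    rcases lt_or_eq_of_le (hx i) with h | h
    · exact h
    · exfalso
      have hxj0 : x j = 0 := le_antisymm (by rw [← h] at hqx; linarith) (hx j)
      have : P = 0 := Finset.prod_eq_zero (Finset.mem_univ j)
        (by rw [hxj0]; exact Real.zero_rpow (ha j).ne')
      linarith
  have hxj : 0 < x j := lt_of_lt_of_le (by positivity) hpx
  set s := a i + a j with hs
  have hs0 : 0 < s := by have := ha i; have := ha j; positivity
  set c := a j / s with hc
  have hc0 : 0 < c := div_pos (ha j) hs0
  have hc1 : c < 1 := by rw [hc, div_lt_one hs0]; have := ha i; linarith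
  have h1c : a i / s = 1 - c := by rw [hc]; field_simp; ring
  set pc := p ^ c with hpc
  set qc := q ^ c with hqc
  have hpc0 : 0 < pc := Real.rpow_pos_of_pos hp _
  have hqc0 : 0 < qc := Real.rpow_pos_of_pos hq _
  have eq : q ^ (1 - c) = q / qc := by rw [Real.rpow_sub hq, Real.rpow_one]
  have ep : p ^ (1 - c) = p / pc := by rw [Real.rpow_sub hp, Real.rpow_one]
  have eq' : q ^ (-c) = 1 / qc := by rw [Real.rpow_neg hq.le, one_div]
  have ep' : p ^ (-c) = 1 / pc := by rw [Real.rpow_neg hp.le, one_div]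
  have hdj' : dj = q / qc - p / pc := by rw [hdj, h1c, eq, ep]
  have hdi' : di = 1 / qc - 1 / pc := by rw [hdi, eq', ep']
  -- linear identity
  have key_lin : ∀ t : ℝ, (pc * qc / (q - p)) * (dj - di * t)
      = ((q - t) / (q - p)) * pc + ((t - p) / (q - p)) * qc := by
    intro t
    rw [hdj', hdi']
    field_simp
    ring
  have oneD : ∀ t : ℝ, p ≤ t → t ≤ q →
      (pc * qc / (q - p)) * (dj - di * t) ≤ t ^ c := by
    intro t h1 h2
    rw [key_lin t]
    exact chord_aux hc0 hc1.le hp.le hpq h1 h2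
  -- t = x j / x i
  set t := x j / x i with htdef
  have hxjt : x j = t * x i := by rw [htdef]; field_simp
  have ht1 : p ≤ t := (le_div_iff₀ hxi).2 (by linarith)
  have ht2 : t ≤ q := (div_le_iff₀ hxi).2 (by linarith)
  have ht0 : 0 < t := lt_of_lt_of_le hp ht1
  -- nonnegativity of dj - di * t for t in [p,q]
  have hdt : ∀ t' : ℝ, p ≤ t' → t' ≤ q → 0 ≤ dj - di * t' := by
    intro t' h1 h2
    have h3 : 0 ≤ ((q - t') / (q - p)) * pc + ((t' - p) / (q - p)) * qc := by
      apply add_nonneg <;> apply mul_nonneg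
      · apply div_nonneg <;> linarith
      · exact hpc0.le
      · apply div_nonneg <;> linarith
      · exact hqc0.le
    rw [← key_lin t'] at h3
    have hpos : 0 < pc * qc / (q - p) := by positivity
    exact nonneg_of_mul_nonneg_right (by linarith [h3]) hpos
  have hdtt : 0 ≤ dj - di * t := hdt t ht1 ht2
  -- lam = (pc*qc/(q-p))^s
  have hdip : dj - di * p = (q - p) / qc := by
    rw [hdj', hdi']; field_simp; ring
  have hcs : c * s = a j := by rw [hc]; field_simp
  have hlam' : lam = (pc * qc / (q - p)) ^ s := by
    rw [hlam, hdip, Real.div_rpow hqp.le hqc0.le,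
      Real.div_rpow (by positivity) hqp.le, Real.mul_rpow hpc0.le hqc0.le,
      hpc, hqc, ← Real.rpow_mul hp.le, ← Real.rpow_mul hq.le, hcs,
      div_div_eq_mul_div]
  have hlam0 : 0 ≤ lam := by rw [hlam']; positivity
  -- raise the 1-D inequality to power s
  have pow_ineq : lam * (dj - di * t) ^ s ≤ t ^ a j := by
    have h1 := Real.rpow_le_rpow (by positivity) (oneD t ht1 ht2) hs0.le
    rw [Real.mul_rpow (by positivity) hdtt, ← Real.rpow_mul ht0.le, hcs] at h1
    rw [hlam']
    exact h1
  -- two-variable bound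
  set X := dj * x i - di * x j with hXdef
  have hXt : X = x i * (dj - di * t) := by rw [hXdef, hxjt]; ring
  have hX0 : 0 ≤ X := by rw [hXt]; exact mul_nonneg hxi.le hdtt
  have hXs : X ^ s = x i ^ s * (dj - di * t) ^ s := by
    rw [hXt, Real.mul_rpow hxi.le hdtt]
  have hxixj : x i ^ a i * x j ^ a j = x i ^ s * t ^ a j := by
    rw [hxjt, Real.mul_rpow ht0.le hxi.le, hs, Real.rpow_add hxi]
    ring
  have stepA : lam * X ^ s ≤ x i ^ a i * x j ^ a j := by
    rw [hXs, hxixj]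
    calc lam * (x i ^ s * (dj - di * t) ^ s)
        = x i ^ s * (lam * (dj - di * t) ^ s) := by ring
      _ ≤ x i ^ s * t ^ a j :=
        mul_le_mul_of_nonneg_left pow_ineq (Real.rpow_nonneg hxi.le _)
  -- product split
  set R := ∏ k ∈ ({i, j} : Finset (Fin n))ᶜ, x k ^ a k with hR
  have hR0 : 0 ≤ R := Finset.prod_nonneg fun k _ => Real.rpow_nonneg (hx k) _
  have hPsplit : P = x i ^ a i * x j ^ a j * R := by
    rw [hP, ← Finset.prod_mul_prod_compl ({i, j} : Finset (Fin n)),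
      Finset.prod_pair hij, ← hR]
  set Y := lam * X ^ s * R with hY
  have hY0 : 0 ≤ Y := by
    apply mul_nonneg (mul_nonneg hlam0 (Real.rpow_nonneg hX0 _)) hR0
  have stepA' : Y ≤ P := by
    rw [hPsplit, hY]
    exact mul_le_mul_of_nonneg_right stepA hR0
  -- chord in the function value
  set L := ℓ ^ (1 / β) with hL
  set U := u ^ (1 / β) with hU
  have hLU : L < U := Real.rpow_lt_rpow hℓ.le hℓu (by positivity)
  have hL0 : 0 < L := Real.rpow_pos_of_pos hℓ _
  set T := P ^ (1 / β) with hT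
  have hLT : L ≤ T := Real.rpow_le_rpow hℓ.le hl (by positivity)
  have hTU : T ≤ U := Real.rpow_le_rpow hPpos.le hu (by positivity)
  have hinv : 1 / β * β = 1 := by field_simp
  have hLβ : L ^ β = ℓ := by rw [hL, ← Real.rpow_mul hℓ.le, hinv, Real.rpow_one]
  have hUβ : U ^ β = u := by
    rw [hU, ← Real.rpow_mul (by linarith : (0:ℝ) ≤ u), hinv, Real.rpow_one]
  have hTβ : T ^ β = P := by rw [hT, ← Real.rpow_mul hPpos.le, hinv, Real.rpow_one]
  have chord2 := chord_aux hβ0 hβ1 hL0.le hLU hLT hTU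
  rw [hLβ, hUβ, hTβ] at chord2
  -- rewrite goal LHS
  have hYrpow : Y ^ (1 / β) = lam ^ (1 / β) * X ^ (s / β) * R ^ (1 / β) := by
    rw [hY, Real.mul_rpow (mul_nonneg hlam0 (Real.rpow_nonneg hX0 _)) hR0,
      Real.mul_rpow hlam0 (Real.rpow_nonneg hX0 _), ← Real.rpow_mul hX0]
    congr 2
    field_simp
  have hYT : Y ^ (1 / β) ≤ T := Real.rpow_le_rpow hY0 stepA' (by positivity)
  have hcoef : 0 ≤ (u - ℓ) / (U - L) := by
    apply div_nonneg <;> linarith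
  -- final chain
  have goal_eq : ζ * X ^ (s / β) * R ^ (1 / β) + z₀
      = (u - ℓ) / (U - L) * Y ^ (1 / β) + z₀ := by
    rw [hYrpow, hζ]; ring
  have final1 : (u - ℓ) / (U - L) * Y ^ (1 / β) + z₀
      ≤ (u - ℓ) / (U - L) * T + z₀ := by
    have := mul_le_mul_of_nonneg_left hYT hcoef
    linarith
  have final2 : (u - ℓ) / (U - L) * T + z₀
      = ((U - T) / (U - L)) * ℓ + ((T - L) / (U - L)) * u := by
    have hULne : U - L ≠ 0 := sub_ne_zero.mpr hLU.ne'
    rw [hz₀]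
    field_simp
    ring
  calc ζ * X ^ (s / β) * R ^ (1 / β) + z₀
      = (u - ℓ) / (U - L) * Y ^ (1 / β) + z₀ := goal_eq
    _ ≤ (u - ℓ) / (U - L) * T + z₀ := final1
    _ = ((U - T) / (U - L)) * ℓ + ((T - L) / (U - L)) * u := final2
    _ ≤ P := chord2
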